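/- An element a of a complex unital Banach algebra A has a g-Drazin inverse if and only if there exist an idempotent e, an invertible element u, and a quasinilpotent w, pairwise commuting, such that a = eu + w. -/

import Mathlib

open Filter Finset

/-- An element of a complex (Banach) algebra is quasinilpotent if its spectral radius is zero. -/
noncomputable def Quasinilpotent {A : Type*} [Ring A] [Algebra ℂ A] (q : A) : Prop :=
  spectralRadius ℂ q = 0

/-- `a` has a generalized Drazin inverse: some `b` with `ab = ba`, `b = bab`,
and `a - a²b` quasinilpotent. -/
noncomputable def HasGDrazin {A : Type*} [Ring A] [Algebra ℂ A] (a : A) : Prop :=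
  ∃ b : A, a * b = b * a ∧ b = b * a * b ∧ Quasinilpotent (a - a ^ 2 * b)

open Topology ENNReal NNReal

set_option linter.unusedSectionVars false

section AuxGD
variable {A : Type*} [NormedRing A] [NormedAlgebra ℂ A] [CompleteSpace A]


lemma quasi_mul {w : A} (hw : Quasinilpotent w) {c : A} (hc : Commute c w) :
    Quasinilpotent (c * w) := by
  unfold Quasinilpotent at hw ⊢
  refine le_antisymm
    ((spectrum.spectralRadius_le_liminf_pow_nnnorm_pow_one_div ℂ (c * w)).trans ?_) zero_le
  have hlim : Tendsto (fun n : ℕ => (‖c‖₊ : ℝ≥0∞) * (‖w ^ n‖₊ : ℝ≥0∞) ^ (1 / n : ℝ))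
      atTop (𝓝 0) := by
    have h := spectrum.pow_nnnorm_pow_one_div_tendsto_nhds_spectralRadius w
    rw [hw] at h
    simpa using ENNReal.Tendsto.const_mul h (Or.inr ENNReal.coe_ne_top)
  have hbound : ∀ᶠ n : ℕ in atTop, (‖(c * w) ^ n‖₊ : ℝ≥0∞) ^ (1 / n : ℝ) ≤
      (‖c‖₊ : ℝ≥0∞) * (‖w ^ n‖₊ : ℝ≥0∞) ^ (1 / n : ℝ) := by
    filter_upwards [eventually_ge_atTop 1] with n hn
    rw [hc.mul_pow]
    have h1 : (‖c ^ n * w ^ n‖₊ : ℝ≥0∞) ≤ (‖c‖₊ : ℝ≥0∞) ^ n * (‖w ^ n‖₊ : ℝ≥0∞) := by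
      calc (‖c ^ n * w ^ n‖₊ : ℝ≥0∞) ≤ (‖c ^ n‖₊ : ℝ≥0∞) * ‖w ^ n‖₊ := by
            exact_mod_cast nnnorm_mul_le _ _
        _ ≤ (‖c‖₊ : ℝ≥0∞) ^ n * ‖w ^ n‖₊ := by
            gcongr
            exact_mod_cast nnnorm_pow_le' c hn
    calc (‖c ^ n * w ^ n‖₊ : ℝ≥0∞) ^ (1 / n : ℝ)
        ≤ ((‖c‖₊ : ℝ≥0∞) ^ n * (‖w ^ n‖₊ : ℝ≥0∞)) ^ (1 / n : ℝ) := by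
          exact ENNReal.rpow_le_rpow h1 (by positivity)
      _ = (‖c‖₊ : ℝ≥0∞) * (‖w ^ n‖₊ : ℝ≥0∞) ^ (1 / n : ℝ) := by
          rw [ENNReal.mul_rpow_of_nonneg _ _ (by positivity), ← ENNReal.rpow_natCast (‖c‖₊ : ℝ≥0∞) n,
            ← ENNReal.rpow_mul]
          congr 1
          rw [mul_one_div, div_self (by exact_mod_cast Nat.one_le_iff_ne_zero.mp hn)]
          exact ENNReal.rpow_one _
  calc atTop.liminf (fun n : ℕ => (‖(c * w) ^ n‖₊ : ℝ≥0∞) ^ (1 / n : ℝ))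
      ≤ atTop.liminf (fun n : ℕ => (‖c‖₊ : ℝ≥0∞) * (‖w ^ n‖₊ : ℝ≥0∞) ^ (1 / n : ℝ)) :=
        liminf_le_liminf hbound
    _ = 0 := hlim.liminf_eq

lemma isUnit_one_add_quasi {q : A} (hq : Quasinilpotent q) : IsUnit (1 + q) := by
  have h : (-1 : ℂ) ∈ resolventSet ℂ q := by
    apply spectrum.mem_resolventSet_of_spectralRadius_lt
    rw [hq]
    simp
  rw [spectrum.mem_resolventSet_iff] at h
  have h2 : IsUnit (-(1 + q)) := by
    convert h using 1
    simp [Algebra.algebraMap_eq_smul_one]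
    abel
  simpa using h2.neg

lemma comm_inv {R : Type*} [Ring R] {x y y' : R} (h : x * y = y * x)
    (h1 : y * y' = 1) (h2 : y' * y = 1) : y' * x = x * y' := by
  calc y' * x = y' * x * (y * y') := by rw [h1, mul_one]
    _ = y' * (x * y) * y' := by rw [← mul_assoc, mul_assoc y' x y]
    _ = y' * (y * x) * y' := by rw [h]
    _ = (y' * y) * (x * y') := by rw [← mul_assoc y' y x, mul_assoc]
    _ = x * y' := by rw [h2, one_mul]

end AuxGD

theorem stmt6 {A : Type*} [NormedRing A] [NormedAlgebra ℂ A] [CompleteSpace A] (a : A) :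
    HasGDrazin a ↔ ∃ e u w : A, e * e = e ∧ IsUnit u ∧ Quasinilpotent w ∧
      e * u = u * e ∧ e * w = w * e ∧ u * w = w * u ∧ a = e * u + w := by
  constructor
  · intro h
    obtain ⟨b, hab, hbab, hq⟩ := h
    have cab : Commute a b := hab
    set e : A := a * b with he
    have cae : Commute a e := (Commute.refl a).mul_right cab
    have hee : e * e = e := by
      rw [he, mul_assoc a b (a * b), ← mul_assoc b a b, ← hbab]
    have heb : e * b = b := by
      rw [he, cab.eq, ← hbab]
    have hbe : b * e = b := by
      rw [he, ← mul_assoc, ← hbab]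
    refine ⟨e, a * e + (1 - e), a - a * e, hee, ?_, ?_, ?_, ?_, ?_, ?_⟩
    · -- IsUnit
      refine ⟨⟨a * e + (1 - e), b + (1 - e), ?_, ?_⟩, rfl⟩
      · have expand : (a * e + (1 - e)) * (b + (1 - e)) =
            a * (e * b) + (a * e - a * (e * e)) + ((b - e * b) + (1 - e - e + e * e)) := by
          noncomm_ring
        rw [expand, hee, heb, ← he]
        abel
      · have expand : (b + (1 - e)) * (a * e + (1 - e)) =
            b * a * e + (b - b * e) + ((a * e - e * (a * e)) + (1 - e - e + e * e)) := by
          noncomm_ring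
        have h1 : b * a * e = e := by rw [← hab, hee]
        have h2 : e * (a * e) = a * e := by
          rw [← mul_assoc, ← cae.eq, mul_assoc, hee]
        rw [expand, h1, h2, hbe, hee]
        abel
    · -- Quasinilpotent w
      have : a ^ 2 * b = a * e := by rw [pow_two, mul_assoc, ← he]
      rwa [this] at hq
    · exact ((cae.symm.mul_right (Commute.refl e)).add_right
        ((Commute.one_right e).sub_right (Commute.refl e))).eq
    · exact ((cae.symm.sub_right (cae.symm.mul_right (Commute.refl e)))).eq
    · -- u w commute
      have cu : Commute (a * e + (1 - e)) a :=
        ((Commute.refl a).mul_left cae.symm).add_left ((Commute.one_left a).sub_left cae.symm)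
      have cue : Commute (a * e + (1 - e)) e :=
        (cae.mul_left (Commute.refl e)).add_left ((Commute.one_left e).sub_left (Commute.refl e))
      exact (cu.sub_right (cu.mul_right cue)).eq
    · -- a = e u + w
      have h3 : e * (a * e + (1 - e)) = a * e := by
        have expand : e * (a * e + (1 - e)) = e * (a * e) + (e - e * e) := by noncomm_ring
        have h2 : e * (a * e) = a * e := by
          rw [← mul_assoc, ← cae.eq, mul_assoc, hee]
        rw [expand, h2, hee]
        abel
      rw [h3]
      abel
  · intro h
    obtain ⟨e, u, w, hee, hu, hw, heu, hew, huw, ha⟩ := h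
    obtain ⟨U, hU⟩ := hu
    set ui : A := ↑U⁻¹ with hui
    have huui : u * ui = 1 := by rw [← hU, hui]; exact U.mul_inv
    have huiu : ui * u = 1 := by rw [← hU, hui]; exact U.inv_mul
    have ceu : Commute e u := heu
    have cew : Commute e w := hew
    have cuw : Commute u w := huw
    have ceui : Commute e ui := comm_inv ceu.eq huui huiu |>.symm
    have cuiw : Commute ui w := (comm_inv cuw.symm.eq huui huiu).symm.symm
    have cea : Commute e a := by
      rw [ha]; exact ((Commute.refl e).mul_right ceu).add_right cew
    -- q := e * ui * w quasinilpotent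
    have hq : Quasinilpotent (e * ui * w) := by
      have : Commute (e * ui) w := cew.mul_left cuiw
      simpa [mul_assoc] using quasi_mul hw this
    set q : A := e * (ui * w) with hqdef
    obtain ⟨Q, hQ⟩ := isUnit_one_add_quasi (by rw [hqdef, ← mul_assoc]; exact hq : Quasinilpotent q)
    -- r and r'
    set r : A := e * u + (1 - e) with hr
    set r' : A := e * ui + (1 - e) with hr'
    have key : ∀ x y : A, Commute e x → Commute e y → x * y = 1 →
        (e * x + (1 - e)) * (e * y + (1 - e)) = 1 := by
      intro x y cex cey hxy
      have expand : (e * x + (1 - e)) * (e * y + (1 - e)) =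
          e * (x * (e * y)) + (e * x - e * (x * e)) + ((e * y - e * (e * y)) + (1 - e - e + e * e)) := by
        noncomm_ring
      have h1 : x * (e * y) = e * (x * y) := by rw [← mul_assoc, ← cex.eq, mul_assoc]
      have h2 : e * (x * e) = e * x := by rw [← cex.eq, ← mul_assoc, hee]
      have h3 : e * (e * y) = e * y := by rw [← mul_assoc, hee]
      rw [expand, h1, h2, h3, hxy, mul_one, hee]
      abel
    have hrr' : r * r' = 1 := key u ui ceu ceui huui
    have hr'r : r' * r = 1 := key ui u ceui ceu huiu
    -- v = a*e + (1-e) = r * (1 + q)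
    have hae' : (e * u + w) * e = e * u + e * w := by
      have h1 : (e * u + w) * e = e * (u * e) + w * e := by noncomm_ring
      rw [h1, ← ceu.eq, ← mul_assoc, hee, ← cew.eq]
    have hae : a * e = e * u + e * w := by rw [ha, hae']
    set v : A := a * e + (1 - e) with hv
    have hfact : v = r * (1 + q) := by
      have expand : r * (1 + q) = (e * u + (1 - e)) + ((e * u) * (e * (ui * w)) + e * (ui * w) - e * (e * (ui * w))) := by
        rw [hr, hqdef]; noncomm_ring
      have inner : u * (e * (ui * w)) = e * w := by
        rw [← mul_assoc, ← ceu.eq, mul_assoc, ← mul_assoc u ui w, huui, one_mul]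
      have h1 : (e * u) * (e * (ui * w)) = e * w := by
        rw [mul_assoc e u _, inner, ← mul_assoc, hee]
      have h2 : e * (e * (ui * w)) = e * (ui * w) := by rw [← mul_assoc, hee]
      rw [expand, h1, h2, hv, hae]
      abel
    have hunit : IsUnit v := by
      rw [hfact]
      exact IsUnit.mul ⟨⟨r, r', hrr', hr'r⟩, rfl⟩ ⟨Q, hQ⟩
    obtain ⟨V, hV⟩ := hunit
    set v' : A := ↑V⁻¹ with hv'
    have hvv' : v * v' = 1 := by rw [← hV, hv']; exact V.mul_inv
    have hv'v : v' * v = 1 := by rw [← hV, hv']; exact V.inv_mul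
    have cev : Commute e v := by
      rw [hv]
      exact (cea.mul_right (Commute.refl e)).add_right ((Commute.one_right e).sub_right (Commute.refl e))
    have cav : Commute a v := by
      rw [hv]
      exact ((Commute.refl a).mul_right cea.symm).add_right ((Commute.one_right a).sub_right cea.symm)
    have cev' : v' * e = e * v' := comm_inv cev.eq hvv' hv'v
    have cav' : v' * a = a * v' := comm_inv cav.eq hvv' hv'v
    have hve : v * e = a * e := by
      rw [hv]
      have expand : (a * e + (1 - e)) * e = a * (e * e) + (e - e * e) := by noncomm_ring
      rw [expand, hee]
      abel
    refine ⟨v' * e, ?_, ?_, ?_⟩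
    · -- a * (v'*e) = (v'*e) * a
      calc a * (v' * e) = (a * v') * e := by rw [mul_assoc]
        _ = (v' * a) * e := by rw [cav']
        _ = v' * (a * e) := by rw [mul_assoc]
        _ = v' * (e * a) := by rw [cea.eq]
        _ = (v' * e) * a := by rw [mul_assoc]
    · -- b = b a b
      have hab : a * (v' * e) = e := by
        calc a * (v' * e) = (a * v') * e := by rw [mul_assoc]
          _ = (v' * a) * e := by rw [cav']
          _ = v' * (a * e) := by rw [mul_assoc]
          _ = v' * (v * e) := by rw [← hve]
          _ = (v' * v) * e := by rw [mul_assoc]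
          _ = e := by rw [hv'v, one_mul]
      have hba : (v' * e) * a = e := by
        calc (v' * e) * a = v' * (e * a) := by rw [mul_assoc]
          _ = v' * (a * e) := by rw [cea.eq]
          _ = v' * (v * e) := by rw [← hve]
          _ = (v' * v) * e := by rw [mul_assoc]
          _ = e := by rw [hv'v, one_mul]
      calc v' * e = v' * (e * e) := by rw [hee]
        _ = (v' * e) * e := by rw [← mul_assoc]
        _ = (v' * e) * (a * (v' * e)) := by rw [hab]
        _ = ((v' * e) * a) * (v' * e) := by rw [← mul_assoc]
    · -- quasinilpotent
      have h1 : a ^ 2 * (v' * e) = a * e := by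
        have hab : a * (v' * e) = e := by
          calc a * (v' * e) = (a * v') * e := by rw [mul_assoc]
            _ = (v' * a) * e := by rw [cav']
            _ = v' * (a * e) := by rw [mul_assoc]
            _ = v' * (v * e) := by rw [← hve]
            _ = (v' * v) * e := by rw [mul_assoc]
            _ = e := by rw [hv'v, one_mul]
        rw [pow_two, mul_assoc, hab]
      rw [h1]
      have h2 : a - a * e = (1 - e) * w := by
        rw [ha, hae']
        noncomm_ring
      rw [h2]
      exact quasi_mul hw ((Commute.one_left w).sub_left cew)
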